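/- TDP-only plant: fix the RODP output at w_r = 0 and assume g ≥ 0. Then the point w_h = w_h^EX maximizes the profit over the TDP range: for all w_h ∈ [w̲_h, w̄_h], Π(w_h, 0, g) ≤ Π(w_h^EX, 0, g). -/
import Mathlib


open Set

noncomputable section

/-- Net electricity exchange. -/
def netz (αr ηh wh wr g : ℝ) : ℝ := wr / αr - wh / ηh - g

/-- Electricity payment under net metering. -/
def epay (πp πm π0 αr ηh wh wr g : ℝ) : ℝ :=
  πp * max (netz αr ηh wh wr g) 0 + πm * min (netz αr ηh wh wr g) 0 + π0

/-- WDP profit. -/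
def profit (πw πp πm π0 αr αh ηh : ℝ) (C : ℝ → ℝ) (wh wr g : ℝ) : ℝ :=
  πw * (wh + wr) - epay πp πm π0 αr ηh wh wr g - C (wh / αh)

/-- clamp(x, a, b) = max(a, min(x, b)). -/
def clampR (x a b : ℝ) : ℝ := max a (min x b)

/-- Value function: sup of profit over the feasible rectangle. -/
def Pstar (πw πp πm π0 αr αh ηh : ℝ) (C : ℝ → ℝ) (wlh wuh wlr wur g : ℝ) : ℝ :=
  sSup ((fun p : ℝ × ℝ => profit πw πp πm π0 αr αh ηh C p.1 p.2 g) ''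
    (Icc wlh wuh ×ˢ Icc wlr wur))

/-- TDP-only plant (w_r = 0, g ≥ 0): w_h^EX is optimal. -/
theorem tdp_only_dispatch
    (πp πm π0 πw αh ηh αr wlh wuh wlr wur : ℝ) (C : ℝ → ℝ)
    (hπ : πm ≤ πp) (hπm : 0 ≤ πm) (hπw : 0 ≤ πw)
    (hαh : 0 < αh) (hηh : 0 < ηh) (hαr : 0 < αr)
    (hwlh : 0 ≤ wlh) (hwhb : wlh ≤ wuh) (hwlr : 0 ≤ wlr) (hwrb : wlr ≤ wur)
    (hC : StrictConvexOn ℝ univ C) (hCd : Differentiable ℝ C) (hCm : Monotone C)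
    (Wfun : ℝ → ℝ)
    (hWfun : ∀ δ : ℝ, Wfun δ ∈ Icc wlh wuh ∧
      ∀ w ∈ Icc wlh wuh,
        (πw + δ / ηh) * w - C (w / αh) ≤ (πw + δ / ηh) * Wfun δ - C (Wfun δ / αh))
    (g : ℝ) (hg : 0 ≤ g) :
    ∀ wh ∈ Icc wlh wuh,
      profit πw πp πm π0 αr αh ηh C wh 0 g ≤
        profit πw πp πm π0 αr αh ηh C (Wfun πm) 0 g := by
  intro wh hwh
  obtain ⟨hWmem, hWopt⟩ := hWfun πm
  have key : ∀ w, w ∈ Icc wlh wuh →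
      profit πw πp πm π0 αr αh ηh C w 0 g
        = ((πw + πm / ηh) * w - C (w / αh)) + (πm * g - π0) := by
    intro w hw
    have hw0 : 0 ≤ w := le_trans hwlh hw.1
    have hz : netz αr ηh w 0 g ≤ 0 := by
      have h1 : 0 ≤ w / ηh := div_nonneg hw0 hηh.le
      unfold netz
      simp
      linarith
    unfold profit epay
    rw [max_eq_right hz, min_eq_left hz]
    unfold netz
    field_simp
    ring
  rw [key wh hwh, key _ hWmem]
  have := hWopt wh hwh
  linarith
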